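/- Let M be a zonoid in ℝ² with support function h and diameter d, and for k ≥ 1 let M_k be its k-th canonical approximation with support function h_k. Then sup_{θ∈ℝ} |h_k(θ) − h(θ)| ≤ π(1+√2)·d/(2k); in particular d_H(M, M_k) ≤ π(1+√2)·d/(2k). -/

import Mathlib

open MeasureTheory Real

noncomputable section

abbrev E2 := EuclideanSpace ℝ (Fin 2)

/-- The unit vector at angle `θ`. -/
def uvec (θ : ℝ) : E2 := (WithLp.equiv 2 (Fin 2 → ℝ)).symm ![Real.cos θ, Real.sin θ]

/-- Rotation of the plane by angle `θ`. -/
def rot (θ : ℝ) (x : E2) : E2 :=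
  (WithLp.equiv 2 (Fin 2 → ℝ)).symm
    ![Real.cos θ * x 0 - Real.sin θ * x 1, Real.sin θ * x 0 + Real.cos θ * x 1]

/-- The support function of a set `M ⊆ ℝ²`, as a function of the angle `θ`. -/
def supp (M : Set E2) (θ : ℝ) : ℝ := sSup ((fun x : E2 => (inner ℝ x (uvec θ) : ℝ)) '' M)

/-- The excluded area function: the area of the difference body `M - R_θ M`. -/
def Ex (θ : ℝ) (M : Set E2) : ℝ :=
  (volume {p : E2 | ∃ x ∈ M, ∃ y ∈ M, p = x - rot θ y}).toReal

/-- The `k`-th canonical approximation of `M`. -/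
def canonApprox (M : Set E2) (k : ℕ) : Set E2 :=
  ⋂ i ∈ Finset.Icc 1 (4 * k),
    {x : E2 | (inner ℝ x (uvec ((i : ℝ) * π / (2 * k))) : ℝ) ≤ supp M ((i : ℝ) * π / (2 * k))}

/-! ### Auxiliary lemmas -/

lemma uvec_apply0 (θ : ℝ) : uvec θ 0 = Real.cos θ := rfl
lemma uvec_apply1 (θ : ℝ) : uvec θ 1 = Real.sin θ := rfl

lemma inner_uvec (x : E2) (θ : ℝ) :
    (inner ℝ x (uvec θ) : ℝ) = x 0 * Real.cos θ + x 1 * Real.sin θ := by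
  simp [PiLp.inner_apply, Fin.sum_univ_two, uvec_apply0, uvec_apply1]; ring

lemma norm_uvec (θ : ℝ) : ‖uvec θ‖ = 1 := by
  rw [EuclideanSpace.norm_eq]
  simp only [Fin.sum_univ_two, uvec_apply0, uvec_apply1, Real.norm_eq_abs, sq_abs]
  rw [add_comm, Real.sin_sq_add_cos_sq, Real.sqrt_one]

lemma dist_uvec_le (a b : ℝ) : ‖uvec a - uvec b‖ ≤ |a - b| := by
  have h1 : ‖uvec a - uvec b‖ ^ 2 = 2 - 2 * Real.cos (a - b) := by
    rw [EuclideanSpace.norm_eq, Real.sq_sqrt (by positivity)]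
    simp only [Fin.sum_univ_two, PiLp.sub_apply, uvec_apply0, uvec_apply1,
      Real.norm_eq_abs, sq_abs, Real.cos_sub]
    nlinarith [Real.sin_sq_add_cos_sq a, Real.sin_sq_add_cos_sq b]
  have h2 : 1 - (a-b)^2/2 ≤ Real.cos (a - b) := Real.one_sub_sq_div_two_le_cos
  have h3 : ‖uvec a - uvec b‖ ^ 2 ≤ (a-b)^2 := by nlinarith
  calc ‖uvec a - uvec b‖ = √(‖uvec a - uvec b‖^2) := by
        rw [Real.sqrt_sq (norm_nonneg _)]
    _ ≤ √((a-b)^2) := Real.sqrt_le_sqrt h3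
    _ = |a - b| := Real.sqrt_sq_eq_abs _

lemma sin_half_sum (δ s : ℝ) :
    Real.sin (δ - s) + Real.sin s = 2 * Real.sin (δ/2) * Real.cos (δ/2 - s) := by
  have h : δ - s = 2*(δ/2) - s := by ring
  rw [h, Real.sin_sub, Real.sin_two_mul, Real.cos_two_mul', Real.cos_sub]
  linear_combination (-Real.sin s) * Real.sin_sq_add_cos_sq (δ/2)

lemma trig_core (δ s : ℝ) (hδ0 : 0 < δ) (hδ : δ ≤ π/2) :
    Real.sin (δ - s) + Real.sin s ≤ Real.sin δ * (1 + δ^2/2) := by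
  have hsd : Real.sin δ = 2 * Real.sin (δ/2) * Real.cos (δ/2) := by
    rw [show δ = 2*(δ/2) by ring, Real.sin_two_mul]; ring_nf
  have hsin : 0 < Real.sin (δ/2) := Real.sin_pos_of_pos_of_lt_pi (by linarith)
    (by nlinarith [Real.pi_gt_three])
  have hcos1 : Real.cos (δ/2 - s) ≤ 1 := Real.cos_le_one _
  have hcos2 : 1 - (δ/2)^2/2 ≤ Real.cos (δ/2) := Real.one_sub_sq_div_two_le_cos
  have hδ2 : δ^2 ≤ 2.5 := by nlinarith [Real.pi_lt_d2]
  rw [sin_half_sum, hsd]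
  have key : 1 ≤ Real.cos (δ/2) * (1 + δ^2/2) := by nlinarith
  nlinarith [hsin, key, hcos1]

section SuppLemmas
variable {M : Set E2}

lemma bddAbove_img (hcpt : IsCompact M) (θ : ℝ) :
    BddAbove ((fun x : E2 => (inner ℝ x (uvec θ) : ℝ)) '' M) :=
  (hcpt.image (continuous_id.inner continuous_const)).bddAbove

lemma le_supp (hcpt : IsCompact M) {x : E2} (hx : x ∈ M) (θ : ℝ) :
    (inner ℝ x (uvec θ) : ℝ) ≤ supp M θ :=
  le_csSup (bddAbove_img hcpt θ) ⟨x, hx, rfl⟩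

lemma supp_le (hne : M.Nonempty) {c θ : ℝ} (h : ∀ x ∈ M, (inner ℝ x (uvec θ) : ℝ) ≤ c) :
    supp M θ ≤ c :=
  csSup_le (hne.image _) (by rintro _ ⟨x, hx, rfl⟩; exact h x hx)

lemma norm_le_half_diam (hcpt : IsCompact M) (hsymm : M = -M) {x : E2} (hx : x ∈ M) :
    ‖x‖ ≤ Metric.diam M / 2 := by
  have hnx : -x ∈ M := by rw [hsymm]; exact Set.neg_mem_neg.mpr hx
  have hd : dist x (-x) ≤ Metric.diam M := Metric.dist_le_diam_of_mem hcpt.isBounded hx hnx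
  have : dist x (-x) = 2 * ‖x‖ := by
    rw [dist_eq_norm, sub_neg_eq_add, ← two_smul ℝ x, norm_smul]
    simp
  linarith

lemma zero_mem (hne : M.Nonempty) (hconv : Convex ℝ M) (hsymm : M = -M) : (0 : E2) ∈ M := by
  obtain ⟨x, hx⟩ := hne
  have hnx : -x ∈ M := by rw [hsymm]; exact Set.neg_mem_neg.mpr hx
  have hmem := hconv hx hnx (by norm_num : (0:ℝ) ≤ 1/2) (by norm_num : (0:ℝ) ≤ 1/2) (by norm_num)
  have h0 : (1/2 : ℝ) • x + (1/2 : ℝ) • (-x) = 0 := by module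
  rwa [h0] at hmem

lemma supp_nonneg (hne : M.Nonempty) (hcpt : IsCompact M) (hconv : Convex ℝ M)
    (hsymm : M = -M) (θ : ℝ) : 0 ≤ supp M θ := by
  have h0 := le_supp hcpt (zero_mem hne hconv hsymm) θ
  simpa using h0

lemma supp_le_half_diam (hne : M.Nonempty) (hcpt : IsCompact M) (hsymm : M = -M) (θ : ℝ) :
    supp M θ ≤ Metric.diam M / 2 := by
  refine supp_le hne fun x hx => ?_
  calc (inner ℝ x (uvec θ) : ℝ) ≤ ‖x‖ * ‖uvec θ‖ := real_inner_le_norm x _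
    _ = ‖x‖ := by rw [norm_uvec, mul_one]
    _ ≤ _ := norm_le_half_diam hcpt hsymm hx

lemma uvec_per (θ : ℝ) (n : ℤ) : uvec (θ + n * (2 * π)) = uvec θ := by
  unfold uvec; rw [Real.cos_add_int_mul_two_pi, Real.sin_add_int_mul_two_pi]

lemma supp_per (M : Set E2) (θ : ℝ) (n : ℤ) : supp M (θ + n * (2 * π)) = supp M θ := by
  unfold supp; rw [uvec_per]

lemma supp_lip (hne : M.Nonempty) (hcpt : IsCompact M) (hsymm : M = -M)
    {a θ L : ℝ} (hL : |a - θ| ≤ L) :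
    supp M a ≤ supp M θ + Metric.diam M / 2 * L := by
  refine supp_le hne fun x hx => ?_
  have h1 : (inner ℝ x (uvec a) : ℝ) = inner ℝ x (uvec θ) + inner ℝ x (uvec a - uvec θ) := by
    rw [inner_sub_right]; ring
  have h2 : (inner ℝ x (uvec a - uvec θ) : ℝ) ≤ ‖x‖ * ‖uvec a - uvec θ‖ := real_inner_le_norm _ _
  have h3 : ‖x‖ * ‖uvec a - uvec θ‖ ≤ (Metric.diam M / 2) * L := by
    nlinarith [norm_nonneg (uvec a - uvec θ), Metric.diam_nonneg (s := M), dist_uvec_le a θ,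
      norm_le_half_diam hcpt hsymm hx, (dist_uvec_le a θ).trans hL, norm_nonneg x]
  have h4 := le_supp hcpt hx θ
  linarith

lemma mem_canon {k : ℕ} {x : E2} :
    x ∈ canonApprox M k ↔ ∀ i ∈ Finset.Icc 1 (4 * k),
      (inner ℝ x (uvec ((i : ℝ) * π / (2 * k))) : ℝ) ≤ supp M ((i : ℝ) * π / (2 * k)) := by
  simp [canonApprox]

lemma M_subset_canon (hcpt : IsCompact M) (k : ℕ) : M ⊆ canonApprox M k := by
  intro x hx
  rw [mem_canon]
  intro i _
  exact le_supp hcpt hx _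

lemma canon_constraint {k : ℕ} (hk : 1 ≤ k) {x : E2} (hx : x ∈ canonApprox M k)
    {i : ℕ} (hi : i ≤ 4 * k) :
    (inner ℝ x (uvec ((i : ℝ) * (π / (2 * k)))) : ℝ) ≤ supp M ((i : ℝ) * (π / (2 * k))) := by
  rw [mem_canon] at hx
  have hkR : (0:ℝ) < (k : ℝ) := by exact_mod_cast hk
  rcases Nat.eq_zero_or_pos i with rfl | hi1
  · have h4k := hx (4 * k) (Finset.mem_Icc.mpr ⟨by omega, le_refl _⟩)
    have hang : ((4 * k : ℕ) : ℝ) * π / (2 * k) = 0 + (1:ℤ) * (2 * π) := by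
      push_cast; field_simp; try ring
    rw [hang, supp_per, uvec_per] at h4k
    have h0 : ((0 : ℕ) : ℝ) * (π / (2 * (k:ℝ))) = 0 := by norm_num
    rw [h0]
    simpa using h4k
  · have := hx i (Finset.mem_Icc.mpr ⟨hi1, hi⟩)
    rwa [mul_div_assoc] at this

lemma canon_norm_le (hne : M.Nonempty) (hcpt : IsCompact M) (hsymm : M = -M)
    {k : ℕ} (hk : 1 ≤ k) {x : E2} (hx : x ∈ canonApprox M k) : ‖x‖ ≤ Metric.diam M := by
  set d := Metric.diam M with hd
  have hd0 : 0 ≤ d := Metric.diam_nonneg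
  have hkR : ((k:ℝ)) ≠ 0 := Nat.cast_ne_zero.mpr (by omega)
  have c1 := canon_constraint hk hx (i := k) (by omega)
  have c2 := canon_constraint hk hx (i := 2 * k) (by omega)
  have c3 := canon_constraint hk hx (i := 3 * k) (by omega)
  have c4 := canon_constraint hk hx (i := 4 * k) (by omega)
  rw [show ((k:ℕ):ℝ) * (π/(2*(k:ℝ))) = π/2 by field_simp; try ring] at c1
  rw [show ((2*k:ℕ):ℝ) * (π/(2*(k:ℝ))) = π by push_cast; field_simp; try ring] at c2
  rw [show ((3*k:ℕ):ℝ) * (π/(2*(k:ℝ))) = π + π/2 by push_cast; field_simp; try ring] at c3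
  rw [show ((4*k:ℕ):ℝ) * (π/(2*(k:ℝ))) = π + π + π + π - 2*π by
    push_cast; field_simp; try ring] at c4
  rw [inner_uvec] at c1 c2 c3 c4
  simp only [Real.cos_pi_div_two, Real.sin_pi_div_two, Real.cos_pi, Real.sin_pi,
    Real.cos_add, Real.sin_add, Real.cos_sub, Real.sin_sub, Real.cos_two_pi, Real.sin_two_pi]
    at c1 c2 c3 c4
  have s1 := supp_le_half_diam hne hcpt hsymm (π/2)
  have s2 := supp_le_half_diam hne hcpt hsymm π
  have s3 := supp_le_half_diam hne hcpt hsymm (π + π/2)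
  have s4 := supp_le_half_diam hne hcpt hsymm (π + π + π + π - 2*π)
  have h1 : x 1 ≤ d/2 := by rw [hd]; nlinarith
  have h2 : -(x 0) ≤ d/2 := by rw [hd]; nlinarith
  have h3 : -(x 1) ≤ d/2 := by rw [hd]; nlinarith
  have h4 : x 0 ≤ d/2 := by rw [hd]; nlinarith
  rw [EuclideanSpace.norm_eq]
  simp only [Fin.sum_univ_two, Real.norm_eq_abs, sq_abs]
  calc √(x 0 ^ 2 + x 1 ^ 2) ≤ √(d^2) := Real.sqrt_le_sqrt (by nlinarith)
    _ = d := Real.sqrt_sq hd0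

lemma bddAbove_canon (hne : M.Nonempty) (hcpt : IsCompact M) (hsymm : M = -M)
    {k : ℕ} (hk : 1 ≤ k) (θ : ℝ) :
    BddAbove ((fun x : E2 => (inner ℝ x (uvec θ) : ℝ)) '' (canonApprox M k)) := by
  refine ⟨Metric.diam M, ?_⟩
  rintro _ ⟨x, hx, rfl⟩
  calc (inner ℝ x (uvec θ) : ℝ) ≤ ‖x‖ * ‖uvec θ‖ := real_inner_le_norm x _
    _ = ‖x‖ := by rw [norm_uvec, mul_one]
    _ ≤ _ := canon_norm_le hne hcpt hsymm hk hx

lemma le_supp_canon (hne : M.Nonempty) (hcpt : IsCompact M) (hsymm : M = -M)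
    {k : ℕ} (hk : 1 ≤ k) {x : E2} (hx : x ∈ canonApprox M k) (θ : ℝ) :
    (inner ℝ x (uvec θ) : ℝ) ≤ supp (canonApprox M k) θ :=
  le_csSup (bddAbove_canon hne hcpt hsymm hk θ) ⟨x, hx, rfl⟩

lemma supp_le_supp_canon (hne : M.Nonempty) (hcpt : IsCompact M) (hsymm : M = -M)
    {k : ℕ} (hk : 1 ≤ k) (θ : ℝ) :
    supp M θ ≤ supp (canonApprox M k) θ :=
  supp_le hne fun x hx => le_supp_canon hne hcpt hsymm hk (M_subset_canon hcpt k hx) θ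

end SuppLemmas

lemma comb (x : E2) (a b θ : ℝ) :
    Real.sin (b - a) * (inner ℝ x (uvec θ) : ℝ) =
      Real.sin (b - θ) * (inner ℝ x (uvec a) : ℝ) + Real.sin (θ - a) * (inner ℝ x (uvec b) : ℝ) := by
  simp only [inner_uvec, Real.sin_sub]; ring

lemma sqrt2_ge : (1.4 : ℝ) ≤ Real.sqrt 2 := by
  nlinarith [Real.sq_sqrt (show (0:ℝ) ≤ 2 by norm_num), Real.sqrt_nonneg 2]

lemma numeric (H d δ c : ℝ) (hH0 : 0 ≤ H) (hHd : H ≤ d/2) (hδ0 : 0 < δ) (hδ16 : δ ≤ 1.6)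
    (hd0 : 0 ≤ d) (hc : 1.4 ≤ c) : (1 + δ^2/2) * (H + d/2*δ) ≤ H + (1+c)*d*δ := by
  nlinarith [mul_nonneg hd0 hδ0.le, mul_nonneg (mul_nonneg hd0 hδ0.le) hδ0.le,
    mul_nonneg (mul_nonneg (mul_nonneg hd0 hδ0.le) hδ0.le) hδ0.le,
    mul_le_mul_of_nonneg_right hHd (mul_nonneg hδ0.le hδ0.le),
    mul_le_mul_of_nonneg_right (mul_le_mul_of_nonneg_right hδ16 hδ0.le) (mul_nonneg hd0 hδ0.le)]
set_option maxHeartbeats 2000000 in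
lemma key_est0 {M : Set E2} (hne : M.Nonempty) (hcpt : IsCompact M) (hconv : Convex ℝ M)
    (hsymm : M = -M) {k : ℕ} (hk : 1 ≤ k) {θ' : ℝ} (hθ'0 : 0 ≤ θ') (hθ'lt : θ' < 2 * π) :
    supp (canonApprox M k) θ' ≤ supp M θ' + π * (1 + Real.sqrt 2) * Metric.diam M / (2 * k) := by
  set d := Metric.diam M with hdd
  have hd0 : 0 ≤ d := Metric.diam_nonneg
  have hkR : (0:ℝ) < (k : ℝ) := by exact_mod_cast hk
  have hk1 : (1:ℝ) ≤ (k:ℝ) := by exact_mod_cast hk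
  set δ : ℝ := π / (2 * (k:ℝ)) with hδdef
  have hδ0 : 0 < δ := by positivity
  have hδpi2 : δ ≤ π / 2 := by
    rw [hδdef, div_le_div_iff₀ (by positivity) (by norm_num)]
    nlinarith [Real.pi_pos]
  have hδ16 : δ ≤ 1.6 := by nlinarith [Real.pi_lt_d2]
  -- choose grid interval
  set i : ℕ := ⌊θ' / δ⌋₊ with hi
  have ha : (i:ℝ) * δ ≤ θ' := by
    calc (i:ℝ) * δ ≤ θ' / δ * δ := by gcongr; exact Nat.floor_le (by positivity)
      _ = θ' := by field_simp
  have hb : θ' < ((i:ℝ) + 1) * δ := by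
    have h1 : θ' / δ < (i:ℝ) + 1 := Nat.lt_floor_add_one _
    calc θ' = θ' / δ * δ := by field_simp
      _ < ((i:ℝ) + 1) * δ := by gcongr
  have hik : i + 1 ≤ 4 * k := by
    have h4 : ((4 * k : ℕ):ℝ) * δ = 2 * π := by rw [hδdef]; push_cast; field_simp; ring
    have h5 : (i:ℝ) < ((4 * k : ℕ):ℝ) := by
      by_contra hcon
      push_neg at hcon
      have : ((4 * k:ℕ):ℝ) * δ ≤ (i:ℝ) * δ := by gcongr
      linarith
    have : i < 4 * k := by exact_mod_cast h5
    omega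
  set s : ℝ := θ' - (i:ℝ) * δ with hs
  have hs0 : 0 ≤ s := by rw [hs]; linarith
  have hsδ : s ≤ δ := by rw [hs]; nlinarith
  set H : ℝ := supp M θ' with hH
  have hH0 : 0 ≤ H := supp_nonneg hne hcpt hconv hsymm θ'
  have hHd : H ≤ d / 2 := supp_le_half_diam hne hcpt hsymm θ'
  set Ha : ℝ := H + d / 2 * δ with hHa
  have hHa0 : 0 ≤ Ha := by positivity
  have hla : supp M ((i:ℝ) * δ) ≤ Ha := by
    refine (supp_lip hne hcpt hsymm (a := (i:ℝ)*δ) (θ := θ') (L := δ) ?_)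
    rw [abs_le]; constructor <;> nlinarith
  have hlb : supp M (((i:ℝ) + 1) * δ) ≤ Ha := by
    refine (supp_lip hne hcpt hsymm (a := ((i:ℝ)+1)*δ) (θ := θ') (L := δ) ?_)
    rw [abs_le]; constructor <;> nlinarith
  have hsinδ : 0 < Real.sin δ := Real.sin_pos_of_pos_of_lt_pi hδ0
    (lt_of_le_of_lt hδpi2 (by linarith [Real.pi_pos]))
  have hsin1 : 0 ≤ Real.sin (δ - s) := Real.sin_nonneg_of_nonneg_of_le_pi (by linarith)
    (by nlinarith [Real.pi_gt_three])
  have hsin2 : 0 ≤ Real.sin s := Real.sin_nonneg_of_nonneg_of_le_pi hs0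
    (by nlinarith [Real.pi_gt_three])
  -- pointwise bound on canonApprox
  have hpt : ∀ x ∈ canonApprox M k, (inner ℝ x (uvec θ') : ℝ) ≤ (1 + δ^2/2) * Ha := by
    intro x hx
    have ca := canon_constraint hk hx (i := i) (by omega)
    have cb := canon_constraint hk hx (i := i + 1) (by omega)
    rw [← hδdef] at ca cb
    have cb' : (inner ℝ x (uvec (((i:ℝ) + 1) * δ)) : ℝ) ≤ supp M (((i:ℝ) + 1) * δ) := by
      have hcast : ((i + 1 : ℕ):ℝ) = (i:ℝ) + 1 := by push_cast; ring
      rwa [hcast] at cb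
    have hcomb := comb x ((i:ℝ) * δ) (((i:ℝ) + 1) * δ) θ'
    rw [show ((i:ℝ) + 1) * δ - (i:ℝ) * δ = δ by ring,
        show ((i:ℝ) + 1) * δ - θ' = δ - s by rw [hs]; ring,
        show θ' - (i:ℝ) * δ = s by rw [hs]] at hcomb
    have step1 : Real.sin δ * (inner ℝ x (uvec θ') : ℝ) ≤ (Real.sin (δ - s) + Real.sin s) * Ha := by
      rw [hcomb]
      have t1 : Real.sin (δ - s) * (inner ℝ x (uvec ((i:ℝ) * δ)) : ℝ) ≤ Real.sin (δ - s) * Ha :=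
        mul_le_mul_of_nonneg_left (ca.trans hla) hsin1
      have t2 : Real.sin s * (inner ℝ x (uvec (((i:ℝ)+1) * δ)) : ℝ) ≤ Real.sin s * Ha :=
        mul_le_mul_of_nonneg_left (cb'.trans hlb) hsin2
      linarith
    have step2 : (Real.sin (δ - s) + Real.sin s) * Ha ≤ Real.sin δ * ((1 + δ^2/2) * Ha) := by
      have ht := mul_le_mul_of_nonneg_right (trig_core δ s hδ0 hδpi2) hHa0
      linarith [ht]
    exact le_of_mul_le_mul_left (step1.trans step2) hsinδ
  have hsupk : supp (canonApprox M k) θ' ≤ (1 + δ^2/2) * Ha :=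
    supp_le (hne.mono (M_subset_canon hcpt k)) hpt
  have htarget : π * (1 + Real.sqrt 2) * d / (2 * (k:ℝ)) = (1 + Real.sqrt 2) * d * δ := by
    rw [hδdef]; field_simp
  have hfinal : (1 + δ^2/2) * Ha ≤ H + (1 + Real.sqrt 2) * d * δ :=
    hHa ▸ numeric H d δ (Real.sqrt 2) hH0 hHd hδ0 hδ16 hd0 sqrt2_ge
  calc supp (canonApprox M k) θ' ≤ (1 + δ^2/2) * Ha := hsupk
    _ ≤ H + (1 + Real.sqrt 2) * d * δ := hfinal
    _ = supp M θ' + π * (1 + Real.sqrt 2) * d / (2 * (k:ℝ)) := by rw [htarget, hH]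

lemma key_est {M : Set E2} (hne : M.Nonempty) (hcpt : IsCompact M) (hconv : Convex ℝ M)
    (hsymm : M = -M) {k : ℕ} (hk : 1 ≤ k) (θ : ℝ) :
    supp (canonApprox M k) θ ≤ supp M θ + π * (1 + Real.sqrt 2) * Metric.diam M / (2 * k) := by
  have h2π : (0:ℝ) < 2 * π := by positivity
  set n : ℤ := ⌊θ / (2 * π)⌋ with hn
  have hfl : (n : ℝ) ≤ θ / (2 * π) := Int.floor_le _
  have hfl2 : θ / (2 * π) < (n : ℝ) + 1 := Int.lt_floor_add_one _
  have hdiv : θ / (2 * π) * (2 * π) = θ := div_mul_cancel₀ θ h2π.ne'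
  have hθ'0 : 0 ≤ θ - n * (2 * π) := by
    have h1 : (n : ℝ) * (2 * π) ≤ θ / (2 * π) * (2 * π) :=
      mul_le_mul_of_nonneg_right hfl h2π.le
    rw [hdiv] at h1; linarith
  have hθ'lt : θ - n * (2 * π) < 2 * π := by
    have h1 : θ / (2 * π) * (2 * π) < ((n : ℝ) + 1) * (2 * π) :=
      mul_lt_mul_of_pos_right hfl2 h2π
    rw [hdiv] at h1; linarith
  have hθeq : θ = (θ - n * (2 * π)) + n * (2 * π) := by ring
  have h1 : supp (canonApprox M k) θ = supp (canonApprox M k) (θ - n * (2 * π)) := by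
    conv_lhs => rw [hθeq]
    rw [supp_per]
  have h2 : supp M θ = supp M (θ - n * (2 * π)) := by
    conv_lhs => rw [hθeq]
    rw [supp_per]
  rw [h1, h2]
  exact key_est0 hne hcpt hconv hsymm hk hθ'0 hθ'lt
lemma exists_uvec {v : E2} (hv : ‖v‖ = 1) : ∃ θ : ℝ, uvec θ = v := by
  have hsum : v 0 ^ 2 + v 1 ^ 2 = 1 := by
    have h := hv
    rw [EuclideanSpace.norm_eq] at h
    simp only [Fin.sum_univ_two, Real.norm_eq_abs, sq_abs] at h
    have := congrArg (· ^ 2) h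
    simpa [Real.sq_sqrt (by positivity : (0:ℝ) ≤ v 0 ^2 + v 1 ^2)] using this
  have h01 : -1 ≤ v 0 := by nlinarith
  have h02 : v 0 ≤ 1 := by nlinarith
  have hsq : Real.sqrt (1 - v 0 ^ 2) = |v 1| := by
    rw [show 1 - v 0 ^2 = v 1 ^2 by linarith, Real.sqrt_sq_eq_abs]
  rcases le_or_gt 0 (v 1) with h1 | h1
  · refine ⟨Real.arccos (v 0), ?_⟩
    ext j
    fin_cases j
    · show Real.cos _ = _
      exact Real.cos_arccos h01 h02
    · show Real.sin _ = _
      rw [Real.sin_arccos, hsq, abs_of_nonneg h1]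
      rfl
  · refine ⟨-Real.arccos (v 0), ?_⟩
    ext j
    fin_cases j
    · show Real.cos _ = _
      rw [Real.cos_neg]
      exact Real.cos_arccos h01 h02
    · show Real.sin _ = _
      rw [Real.sin_neg, Real.sin_arccos, hsq, abs_of_neg h1]
      show - - v 1 = _
      rw [neg_neg]
      rfl

-- nearest point has obtuse angles
lemma proj_inner {M : Set E2} (hconv : Convex ℝ M) {x y : E2} (hy : y ∈ M)
    (hmin : ∀ z ∈ M, dist x y ≤ dist x z) :
    ∀ z ∈ M, (inner ℝ (x - y) (z - y) : ℝ) ≤ 0 := by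
  intro z hz
  by_contra hcon
  push_neg at hcon
  set c : ℝ := inner ℝ (x - y) (z - y) with hc
  set q : ℝ := ‖z - y‖ ^ 2 with hq
  have hq0 : 0 < q := by
    rcases eq_or_ne z y with rfl | hne
    · simp [hc] at hcon
    · exact pow_pos (norm_pos_iff.mpr (sub_ne_zero.mpr hne)) 2
  set t : ℝ := min 1 (c / q) with ht
  have ht0 : 0 < t := lt_min one_pos (div_pos hcon hq0)
  have ht1 : t ≤ 1 := min_le_left _ _
  have htq : t * q ≤ c := by
    have : t ≤ c / q := min_le_right _ _
    calc t * q ≤ c / q * q := by gcongr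
      _ = c := by field_simp
  have hw : (1 - t) • y + t • z ∈ M := hconv hy hz (by linarith) ht0.le (by ring)
  have hwx : dist x y ≤ dist x ((1 - t) • y + t • z) := hmin _ hw
  have hd : x - ((1 - t) • y + t • z) = (x - y) - t • (z - y) := by
    module
  have hexp : dist x ((1 - t) • y + t • z) ^ 2 = dist x y ^ 2 - 2 * t * c + t^2 * q := by
    rw [dist_eq_norm, dist_eq_norm, hd, @norm_sub_sq_real, real_inner_smul_right, norm_smul]
    rw [Real.norm_eq_abs, abs_of_nonneg ht0.le]
    rw [hc, hq]
    ring
  have hsq : dist x y ^ 2 ≤ dist x ((1 - t) • y + t • z) ^ 2 := by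
    have := dist_nonneg (x := x) (y := y)
    nlinarith [hwx]
  rw [hexp] at hsq
  nlinarith [mul_le_mul_of_nonneg_left htq ht0.le]

set_option maxHeartbeats 1000000 in
theorem stmt17 (M : Set E2) (hne : M.Nonempty) (hcpt : IsCompact M) (hconv : Convex ℝ M)
    (hsymm : M = -M) (k : ℕ) (hk : 1 ≤ k) :
    (∀ θ : ℝ, |supp (canonApprox M k) θ - supp M θ| ≤
      π * (1 + Real.sqrt 2) * Metric.diam M / (2 * k)) ∧
    Metric.hausdorffDist M (canonApprox M k) ≤
      π * (1 + Real.sqrt 2) * Metric.diam M / (2 * k) := by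
  set ε : ℝ := π * (1 + Real.sqrt 2) * Metric.diam M / (2 * (k:ℝ)) with hε
  have hε0 : 0 ≤ ε := by
    rw [hε]
    apply div_nonneg _ (by positivity)
    have h2 : (0:ℝ) ≤ 1 + Real.sqrt 2 := by positivity
    exact mul_nonneg (mul_nonneg Real.pi_pos.le h2) Metric.diam_nonneg
  have part1 : ∀ θ : ℝ, |supp (canonApprox M k) θ - supp M θ| ≤ ε := by
    intro θ
    have hlow := supp_le_supp_canon hne hcpt hsymm hk θ
    have hup := key_est hne hcpt hconv hsymm hk θ
    rw [abs_of_nonneg (by linarith)]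
    rw [hε]
    linarith
  refine ⟨part1, ?_⟩
  apply Metric.hausdorffDist_le_of_mem_dist hε0
  · intro x hx
    exact ⟨x, M_subset_canon hcpt k hx, by simp [hε0]⟩
  · intro x hx
    obtain ⟨y, hyM, hyd⟩ := hcpt.exists_infDist_eq_dist hne x
    refine ⟨y, hyM, ?_⟩
    have hmin : ∀ z ∈ M, dist x y ≤ dist x z := fun z hz =>
      hyd ▸ Metric.infDist_le_dist_of_mem hz
    rcases eq_or_ne x y with rfl | hxy
    · simpa using hε0
    · set r : ℝ := ‖x - y‖ with hr
      have hr0 : 0 < r := norm_pos_iff.mpr (sub_ne_zero.mpr hxy)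
      set v : E2 := r⁻¹ • (x - y) with hv
      have hvnorm : ‖v‖ = 1 := by
        rw [hv, norm_smul, Real.norm_eq_abs, abs_inv, abs_of_pos hr0, ← hr]
        field_simp
      obtain ⟨θ, hθ⟩ := exists_uvec hvnorm
      have hproj := proj_inner hconv hyM hmin
      have hMθ : supp M θ ≤ (inner ℝ y v : ℝ) := by
        refine supp_le hne fun z hz => ?_
        rw [hθ]
        have h1 : (inner ℝ z v : ℝ) - inner ℝ y v = inner ℝ (z - y) v := by
          rw [inner_sub_left]
        have h2 : (inner ℝ (z - y) v : ℝ) = r⁻¹ * inner ℝ (z - y) (x - y) := by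
          rw [hv, real_inner_smul_right]
        have h3 : (inner ℝ (z - y) (x - y) : ℝ) ≤ 0 := by
          rw [real_inner_comm]; exact hproj z hz
        have h4 : (inner ℝ (z - y) v : ℝ) ≤ 0 := by
          rw [h2]
          exact mul_nonpos_of_nonneg_of_nonpos (inv_nonneg.mpr hr0.le) h3
        linarith
      have hxv : (inner ℝ x v : ℝ) = inner ℝ y v + r := by
        have h1 : (inner ℝ x v : ℝ) - inner ℝ y v = inner ℝ (x - y) v := by rw [inner_sub_left]
        have h2 : (inner ℝ (x - y) v : ℝ) = r⁻¹ * ‖x - y‖^2 := by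
          rw [hv, real_inner_smul_right, real_inner_self_eq_norm_sq]
        have h3 : r⁻¹ * ‖x - y‖^2 = r := by
          rw [← hr]; field_simp
        linarith [h1, h2.trans h3]
      have hxk : (inner ℝ x (uvec θ) : ℝ) ≤ supp (canonApprox M k) θ :=
        le_supp_canon hne hcpt hsymm hk hx θ
      have hkey := key_est hne hcpt hconv hsymm hk θ
      have hchain : (inner ℝ y v : ℝ) + r ≤ inner ℝ y v + ε := by
        calc (inner ℝ y v : ℝ) + r = inner ℝ x v := hxv.symm
          _ = inner ℝ x (uvec θ) := by rw [hθ]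
          _ ≤ supp (canonApprox M k) θ := hxk
          _ ≤ supp M θ + ε := by rw [hε]; linarith [hkey]
          _ ≤ inner ℝ y v + ε := by linarith [hMθ]
      have : r ≤ ε := by linarith
      rw [dist_eq_norm, ← hr]
      exact this
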